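/- Under the DC-SBM setup, assume every row sum of B is positive, set D_B = diag(B 1_K), B_L = D_B^{-1/2} B D_B^{-1/2}, and 𝒫 = 𝒟^{-1} 𝒜, and let B_L = U Λ U^T be an eigendecomposition with U ∈ ℝ^{K×K} orthogonal and Λ diagonal. Then 𝒫 (Z D_B^{-1/2} U) = (Z D_B^{-1/2} U) Λ; that is, the columns of f* = √m · Z D_B^{-1/2} U are eigenvectors of 𝒫 with eigenvalues given by the diagonal of Λ, where m = 1_K^T B 1_K. -/

import Mathlib

open Matrix BigOperators

/-- In the DC-SBM setup with positive row sums of `B`, if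
`B_L = D_B^{-1/2} B D_B^{-1/2} = U Λ Uᵀ` is an eigendecomposition with `U`
orthogonal and `Λ` diagonal, then `𝒫 (Z D_B^{-1/2} U) = (Z D_B^{-1/2} U) Λ`:
the columns of `f* = √m · Z D_B^{-1/2} U` are eigenvectors of `𝒫 = 𝒟⁻¹ 𝒜`
with eigenvalues the diagonal of `Λ`. -/
theorem dcsbm_eigenvectors_of_P (N K : ℕ) (z : Fin N → Fin K)
    (θ : Fin N → ℝ) (hθpos : ∀ i, 0 < θ i)
    (hθsum : ∀ u : Fin K, ∑ i, (if z i = u then θ i else 0) = 1)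
    (B : Matrix (Fin K) (Fin K) ℝ) (hBsym : B.IsSymm) (hBnn : ∀ u v, 0 ≤ B u v)
    (hBrow : ∀ u, 0 < ∑ v, B u v)
    (U : Matrix (Fin K) (Fin K) ℝ) (hU : Uᵀ * U = 1) (Λd : Fin K → ℝ) :
    let Z : Matrix (Fin N) (Fin K) ℝ := Matrix.of fun i u => if z i = u then 1 else 0
    let Θ : Matrix (Fin N) (Fin N) ℝ := Matrix.diagonal θ
    let A : Matrix (Fin N) (Fin N) ℝ := Θ * Z * B * Zᵀ * Θ
    let D : Matrix (Fin N) (Fin N) ℝ := Matrix.diagonal (fun i => ∑ j, A i j)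
    let P : Matrix (Fin N) (Fin N) ℝ := D⁻¹ * A
    let DBhalfInv : Matrix (Fin K) (Fin K) ℝ :=
      Matrix.diagonal (fun u => (Real.sqrt (∑ v, B u v))⁻¹)
    let BL : Matrix (Fin K) (Fin K) ℝ := DBhalfInv * B * DBhalfInv
    BL = U * Matrix.diagonal Λd * Uᵀ →
      P * (Z * DBhalfInv * U) = Z * DBhalfInv * U * Matrix.diagonal Λd := by
  intro Z Θ A D P DBhalfInv BL hBL
  set r : Fin K → ℝ := fun u => ∑ v, B u v with hr
  -- entries of A
  have hA : ∀ i j, A i j = θ i * (B (z i) (z j) * θ j) := by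
    intro i j
    have h1 : A = Θ * (Z * B * Zᵀ) * Θ := by simp [A, Matrix.mul_assoc]
    have h2 : (Z * B * Zᵀ) i j = B (z i) (z j) := by
      simp [Matrix.mul_apply, Z, Finset.sum_ite_eq', ite_mul, mul_ite]
    rw [h1]; simp only [Θ]
    rw [Matrix.mul_diagonal, Matrix.diagonal_mul, h2]; ring
  -- row sums of A
  have hrow : ∀ i, (∑ j, A i j) = θ i * r (z i) := by
    intro i
    have : (∑ j, A i j) = θ i * ∑ j, B (z i) (z j) * θ j := by
      simp only [hA, Finset.mul_sum]
    rw [this]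
    congr 1
    have : ∀ j : Fin N, B (z i) (z j) * θ j
        = ∑ v : Fin K, (if z j = v then B (z i) v * θ j else 0) := by
      intro j; simp
    simp only [this]
    rw [Finset.sum_comm]
    have : ∀ v : Fin K, (∑ j : Fin N, if z j = v then B (z i) v * θ j else 0)
        = B (z i) v := by
      intro v
      have : (∑ j : Fin N, if z j = v then B (z i) v * θ j else 0)
          = B (z i) v * ∑ j : Fin N, (if z j = v then θ j else 0) := by
        rw [Finset.mul_sum]; congr 1; ext j; split <;> simp
      rw [this, hθsum v, mul_one]
    simp only [this, hr]
  have hrpos : ∀ u, 0 < r u := hBrow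
  have hdpos : ∀ i, 0 < θ i * r (z i) := fun i => mul_pos (hθpos i) (hrpos _)
  -- D inverse
  have hD : D = Matrix.diagonal (fun i => θ i * r (z i)) := by
    have : (fun i => ∑ j, A i j) = fun i => θ i * r (z i) := funext hrow
    simp only [D, this]
  have hDinv : D⁻¹ = Matrix.diagonal (fun i => (θ i * r (z i))⁻¹) := by
    apply Matrix.inv_eq_right_inv
    rw [hD, Matrix.diagonal_mul_diagonal]
    rw [show (fun i => θ i * r (z i) * (θ i * r (z i))⁻¹) = fun i => (1:ℝ) from
      funext fun i => mul_inv_cancel₀ (hdpos i).ne']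
    exact Matrix.diagonal_one
  -- entries of P
  have hP : ∀ i j, P i j = (r (z i))⁻¹ * (B (z i) (z j) * θ j) := by
    intro i j
    simp only [P, hDinv, Matrix.diagonal_mul, hA]
    rw [mul_inv]
    field_simp
    rw [mul_assoc, mul_div_mul_left _ _ (hθpos i).ne']
  -- key identity: P * Z = Z * (DBhalfInv * DBhalfInv * B)
  have hsq : DBhalfInv * DBhalfInv = Matrix.diagonal (fun u => (r u)⁻¹) := by
    rw [show DBhalfInv = Matrix.diagonal (fun u => (Real.sqrt (r u))⁻¹) from rfl,
      Matrix.diagonal_mul_diagonal]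
    apply congrArg Matrix.diagonal
    funext u
    rw [← mul_inv, Real.mul_self_sqrt (hrpos u).le]
  have hPZ : P * Z = Z * (DBhalfInv * (DBhalfInv * B)) := by
    rw [show DBhalfInv * (DBhalfInv * B) = Matrix.diagonal (fun u => (r u)⁻¹) * B from by
      rw [← Matrix.mul_assoc, hsq]]
    ext i u
    rw [Matrix.mul_apply, Matrix.mul_apply]
    have hL : (∑ j, P i j * Z j u) = (r (z i))⁻¹ * B (z i) u := by
      have : ∀ j, P i j * Z j u = if z j = u then (r (z i))⁻¹ * B (z i) u * θ j else 0 := by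
        intro j
        simp only [hP, Z, Matrix.of_apply]
        split <;> rename_i h
        · subst h; ring
        · ring
      simp only [this]
      have : (∑ j : Fin N, if z j = u then (r (z i))⁻¹ * B (z i) u * θ j else 0)
          = (r (z i))⁻¹ * B (z i) u * ∑ j : Fin N, (if z j = u then θ j else 0) := by
        rw [Finset.mul_sum]; congr 1; ext j; split <;> simp
      rw [this, hθsum u, mul_one]
    have hR : (∑ v, Z i v * (Matrix.diagonal (fun u => (r u)⁻¹) * B) v u)
        = (r (z i))⁻¹ * B (z i) u := by
      simp [Z, Matrix.diagonal_mul, Finset.sum_ite_eq', ite_mul]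
    rw [hL, hR]
  -- finish
  have hBLU : BL * U = U * Matrix.diagonal Λd := by
    rw [hBL, Matrix.mul_assoc, Matrix.mul_assoc, hU, Matrix.mul_one]
  calc P * (Z * DBhalfInv * U)
      = (P * Z) * (DBhalfInv * U) := by
        rw [Matrix.mul_assoc Z DBhalfInv U, ← Matrix.mul_assoc P Z]
    _ = Z * DBhalfInv * (BL * U) := by
        rw [hPZ]
        simp only [BL, Matrix.mul_assoc]
    _ = Z * DBhalfInv * (U * Matrix.diagonal Λd) := by rw [hBLU]
    _ = Z * DBhalfInv * U * Matrix.diagonal Λd := (Matrix.mul_assoc _ _ _).symm
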